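/- Let W be symmetric positive definite, λ ∈ (0,1], M n×n symmetric positive definite, R m×m symmetric positive definite, C an m×n matrix, and T an m×m symmetric matrix. Suppose X̄ is a symmetric positive definite matrix with X̄ = g_{λ,W}(X̄) and for every symmetric positive semidefinite X the iterates g_{λ,W}^k(X) converge to X̄ as k → ∞. Then (X̄ ≤ M and C X̄ Cᵀ + R ≤ T) holds if and only if there exists a symmetric matrix X with 0 < X ≤ M, g_{λ,W}(X) ≤ X, and C X Cᵀ + R ≤ T. (Constraint equivalence in the proof of Theorem 4, Appendix G.) -/

import Mathlib

open Matrix Filter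

/-- The modified Riccati operator
`g_{θ,W}(X) = A X Aᵀ + Q − θ A X Cᵀ (C X Cᵀ + W)⁻¹ C X Aᵀ`. -/
noncomputable def gRic {n m : ℕ} (A Q : Matrix (Fin n) (Fin n) ℝ)
    (C : Matrix (Fin m) (Fin n) ℝ) (W : Matrix (Fin m) (Fin m) ℝ) (θ : ℝ)
    (X : Matrix (Fin n) (Fin n) ℝ) : Matrix (Fin n) (Fin n) ℝ :=
  A * X * Aᵀ + Q - θ • (A * X * Cᵀ * (C * X * Cᵀ + W)⁻¹ * (C * X * Aᵀ))

namespace RiccatiAux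

/-- scalar multiples of PSD matrices by a nonneg real are PSD -/
lemma psd_smul {k : ℕ} {c : ℝ} (hc : 0 ≤ c) {M : Matrix (Fin k) (Fin k) ℝ}
    (hM : M.PosSemidef) : (c • M).PosSemidef := by
  have hMT : Mᵀ = M := by
    rw [← Matrix.conjTranspose_eq_transpose_of_trivial]; exact hM.1
  refine Matrix.posSemidef_iff_dotProduct_mulVec.mpr ⟨?_, fun x => ?_⟩
  · show (c • M)ᴴ = c • M
    rw [Matrix.conjTranspose_smul, Matrix.conjTranspose_eq_transpose_of_trivial, hMT,
      star_trivial]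
  · rw [smul_mulVec, dotProduct_smul, smul_eq_mul]
    exact mul_nonneg hc (hM.dotProduct_mulVec_nonneg x)

/-- `B D Bᵀ` is PSD for PSD `D` (real version) -/
lemma psd_conj {k l : ℕ} {D : Matrix (Fin l) (Fin l) ℝ} (hD : D.PosSemidef)
    (B : Matrix (Fin k) (Fin l) ℝ) : (B * D * Bᵀ).PosSemidef := by
  simpa [Matrix.conjTranspose_eq_transpose_of_trivial] using
    hD.mul_mul_conjTranspose_same B

/-- the auxiliary affine operator `ℓ(X, K)` -/
noncomputable def ell {n m : ℕ} (A Q : Matrix (Fin n) (Fin n) ℝ)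
    (C : Matrix (Fin m) (Fin n) ℝ) (W : Matrix (Fin m) (Fin m) ℝ) (θ : ℝ)
    (X : Matrix (Fin n) (Fin n) ℝ) (K : Matrix (Fin n) (Fin m) ℝ) :
    Matrix (Fin n) (Fin n) ℝ :=
  (1 - θ) • (A * X * Aᵀ + Q) +
    θ • ((A - K * C) * X * (A - K * C)ᵀ + K * W * Kᵀ + Q)

/-- purely algebraic completion-of-squares identity -/
lemma quad_identity {n m : ℕ} (A Q X : Matrix (Fin n) (Fin n) ℝ)
    (C : Matrix (Fin m) (Fin n) ℝ) (W S : Matrix (Fin m) (Fin m) ℝ)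
    (K L : Matrix (Fin n) (Fin m) ℝ) (θ : ℝ)
    (hP : A * X * Cᵀ = L * S) (hPT : C * X * Aᵀ = S * Lᵀ)
    (hCXC : C * X * Cᵀ = S - W) :
    (1 - θ) • (A * X * Aᵀ + Q) +
      θ • ((A - K * C) * X * (A - K * C)ᵀ + K * W * Kᵀ + Q) -
      (A * X * Aᵀ + Q - θ • (L * (S * Lᵀ))) =
      θ • ((K - L) * S * (K - L)ᵀ) := by
  have h1 : (A - K * C) * X * (A - K * C)ᵀ =
      A * X * Aᵀ - A * X * Cᵀ * Kᵀ - K * (C * X * Aᵀ) + K * (C * X * Cᵀ) * Kᵀ := by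
    simp only [Matrix.transpose_sub, Matrix.transpose_mul, Matrix.sub_mul, Matrix.mul_sub, Matrix.mul_assoc]
    abel
  rw [h1, hP, hPT, hCXC]
  have h2 : (K - L) * S * (K - L)ᵀ =
      (A * X * Aᵀ - L * S * Kᵀ - K * (S * Lᵀ) + K * (S - W) * Kᵀ) + K * W * Kᵀ + Q +
        L * (S * Lᵀ) - (A * X * Aᵀ + Q) := by
    simp only [Matrix.transpose_sub, Matrix.transpose_mul, Matrix.sub_mul, Matrix.mul_sub, Matrix.mul_assoc]
    abel
  rw [h2]
  simp only [sub_smul, one_smul, smul_add, smul_sub]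
  abel

section

variable {n m : ℕ} (A Q : Matrix (Fin n) (Fin n) ℝ) (C : Matrix (Fin m) (Fin n) ℝ)
  (W : Matrix (Fin m) (Fin m) ℝ) (θ : ℝ)

/-- the optimal gain -/
noncomputable def K0 (X : Matrix (Fin n) (Fin n) ℝ) : Matrix (Fin n) (Fin m) ℝ :=
  A * X * Cᵀ * (C * X * Cᵀ + W)⁻¹

lemma S_posDef (hW : W.PosDef) {X : Matrix (Fin n) (Fin n) ℝ} (hX : X.PosSemidef) :
    (C * X * Cᵀ + W).PosDef :=
  Matrix.PosDef.posSemidef_add (psd_conj hX C) hW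

/-- The key algebraic identity: `ℓ(X,K) - g(X) = θ (K - K₀) S (K - K₀)ᵀ`. -/
lemma ell_sub_g {X : Matrix (Fin n) (Fin n) ℝ} (hX : X.IsHermitian)
    (hS : (C * X * Cᵀ + W).PosDef) (K : Matrix (Fin n) (Fin m) ℝ) :
    ell A Q C W θ X K - gRic A Q C W θ X =
      θ • ((K - K0 A C W X) * (C * X * Cᵀ + W) * (K - K0 A C W X)ᵀ) := by
  have hSsymm : (C * X * Cᵀ + W)ᵀ = C * X * Cᵀ + W := by
    rw [← Matrix.conjTranspose_eq_transpose_of_trivial]; exact hS.isHermitian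
  have hdet : IsUnit (C * X * Cᵀ + W).det :=
    (Matrix.isUnit_iff_isUnit_det _).mp hS.isUnit
  have hXT : Xᵀ = X := by
    rw [← Matrix.conjTranspose_eq_transpose_of_trivial]; exact hX
  have hP : A * X * Cᵀ = K0 A C W X * (C * X * Cᵀ + W) := by
    rw [K0, Matrix.mul_assoc (A * X * Cᵀ), Matrix.nonsing_inv_mul _ hdet, Matrix.mul_one]
  have hPT : C * X * Aᵀ = (C * X * Cᵀ + W) * (K0 A C W X)ᵀ := by
    have h := congrArg Matrix.transpose hP
    simp only [Matrix.transpose_mul, Matrix.transpose_transpose, hXT, hSsymm] at h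
    rw [Matrix.mul_assoc]
    exact h
  have hCXC : C * X * Cᵀ = (C * X * Cᵀ + W) - W := by abel
  unfold ell gRic
  rw [hPT, show A * X * Cᵀ * (C * X * Cᵀ + W)⁻¹ = K0 A C W X from rfl]
  exact quad_identity A Q X C W (C * X * Cᵀ + W) K (K0 A C W X) θ hP hPT hCXC

lemma g_eq_ell (hW : W.PosDef) {X : Matrix (Fin n) (Fin n) ℝ} (hX : X.PosSemidef) :
    gRic A Q C W θ X = ell A Q C W θ X (K0 A C W X) := by
  have h := ell_sub_g A Q C W θ hX.isHermitian (S_posDef C W hW hX) (K0 A C W X)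
  rw [sub_self] at h
  simp only [Matrix.zero_mul, Matrix.transpose_zero, Matrix.mul_zero, smul_zero] at h
  exact (sub_eq_zero.mp h).symm

lemma ell_psd (hQ : Q.PosSemidef) (hW : W.PosDef) (hθ0 : 0 < θ) (hθ1 : θ ≤ 1)
    {X : Matrix (Fin n) (Fin n) ℝ} (hX : X.PosSemidef) (K : Matrix (Fin n) (Fin m) ℝ) :
    (ell A Q C W θ X K).PosSemidef := by
  refine Matrix.PosSemidef.add (psd_smul (by linarith) ?_) (psd_smul hθ0.le ?_)
  · exact (psd_conj hX A).add hQ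
  · exact ((psd_conj hX (A - K * C)).add (psd_conj hW.posSemidef K)).add hQ

lemma g_psd (hQ : Q.PosSemidef) (hW : W.PosDef) (hθ0 : 0 < θ) (hθ1 : θ ≤ 1)
    {X : Matrix (Fin n) (Fin n) ℝ} (hX : X.PosSemidef) :
    (gRic A Q C W θ X).PosSemidef := by
  rw [g_eq_ell A Q C W θ hW hX]
  exact ell_psd A Q C W θ hQ hW hθ0 hθ1 hX _

lemma ell_mono (hθ0 : 0 < θ) (hθ1 : θ ≤ 1) {X Y : Matrix (Fin n) (Fin n) ℝ}
    (hYX : (Y - X).PosSemidef) (K : Matrix (Fin n) (Fin m) ℝ) :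
    (ell A Q C W θ Y K - ell A Q C W θ X K).PosSemidef := by
  have e1 : A * (Y - X) * Aᵀ = A * Y * Aᵀ - A * X * Aᵀ := by
    rw [Matrix.mul_sub, Matrix.sub_mul]
  have e2 : (A - K * C) * (Y - X) * (A - K * C)ᵀ =
      (A - K * C) * Y * (A - K * C)ᵀ - (A - K * C) * X * (A - K * C)ᵀ := by
    rw [Matrix.mul_sub, Matrix.sub_mul]
  have e : ell A Q C W θ Y K - ell A Q C W θ X K =
      (1 - θ) • (A * (Y - X) * Aᵀ) + θ • ((A - K * C) * (Y - X) * (A - K * C)ᵀ) := by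
    unfold ell
    rw [e1, e2]
    simp only [smul_add, smul_sub]
    abel
  rw [e]
  exact (psd_smul (by linarith) (psd_conj hYX A)).add
    (psd_smul hθ0.le (psd_conj hYX (A - K * C)))

lemma g_mono (hQ : Q.PosSemidef) (hW : W.PosDef) (hθ0 : 0 < θ) (hθ1 : θ ≤ 1)
    {X Y : Matrix (Fin n) (Fin n) ℝ} (hX : X.PosSemidef) (hY : Y.PosSemidef)
    (hYX : (Y - X).PosSemidef) :
    (gRic A Q C W θ Y - gRic A Q C W θ X).PosSemidef := by
  have key : gRic A Q C W θ Y - gRic A Q C W θ X =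
      (ell A Q C W θ Y (K0 A C W Y) - ell A Q C W θ X (K0 A C W Y)) +
      (ell A Q C W θ X (K0 A C W Y) - gRic A Q C W θ X) := by
    rw [g_eq_ell A Q C W θ hW hY]
    abel
  rw [key]
  refine (ell_mono A Q C W θ hθ0 hθ1 hYX _).add ?_
  rw [ell_sub_g A Q C W θ hX.isHermitian (S_posDef C W hW hX) _]
  exact psd_smul hθ0.le (psd_conj (S_posDef C W hW hX).posSemidef _)

end

end RiccatiAux

open RiccatiAux in
/-- Constraint equivalence in the proof of Theorem 4 (Appendix G):
`(X̄ ≤ M and C X̄ Cᵀ + R ≤ T)` iff there exists `0 < X ≤ M` with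
`g_{λ,W}(X) ≤ X` and `C X Cᵀ + R ≤ T`. -/
theorem fixed_point_feasibility_with_T {n m : ℕ}
    (A Q : Matrix (Fin n) (Fin n) ℝ) (C : Matrix (Fin m) (Fin n) ℝ)
    (W : Matrix (Fin m) (Fin m) ℝ) (lam : ℝ)
    (hQ : Q.PosSemidef) (hW : W.PosDef) (hlam : lam ∈ Set.Ioc (0 : ℝ) 1)
    (M : Matrix (Fin n) (Fin n) ℝ) (hM : M.PosDef)
    (R : Matrix (Fin m) (Fin m) ℝ) (hR : R.PosDef)
    (T : Matrix (Fin m) (Fin m) ℝ) (hT : T.IsHermitian)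
    (Xb : Matrix (Fin n) (Fin n) ℝ) (hXb : Xb.PosDef)
    (hfix : Xb = gRic A Q C W lam Xb)
    (hconv : ∀ X : Matrix (Fin n) (Fin n) ℝ, X.PosSemidef →
      Tendsto (fun k => (gRic A Q C W lam)^[k] X) atTop (nhds Xb)) :
    ((M - Xb).PosSemidef ∧ (T - (C * Xb * Cᵀ + R)).PosSemidef) ↔
      ∃ X : Matrix (Fin n) (Fin n) ℝ, X.PosDef ∧ (M - X).PosSemidef ∧
        (X - gRic A Q C W lam X).PosSemidef ∧
        (T - (C * X * Cᵀ + R)).PosSemidef := by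
  obtain ⟨hθ0, hθ1⟩ := hlam
  constructor
  · rintro ⟨h1, h2⟩
    refine ⟨Xb, hXb, h1, ?_, h2⟩
    rw [sub_eq_zero_of_eq hfix]
    exact Matrix.PosSemidef.zero
  · rintro ⟨X, hXpd, hXM, hgX, hXT⟩
    -- iterates stay below X
    have key : ∀ k, (X - (gRic A Q C W lam)^[k] X).PosSemidef ∧
        ((gRic A Q C W lam)^[k] X).PosSemidef := by
      intro k
      induction k with
      | zero =>
        refine ⟨?_, ?_⟩
        · simp only [Function.iterate_zero, id_eq, sub_self]
          exact Matrix.PosSemidef.zero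
        · simpa using hXpd.posSemidef
      | succ k ih =>
        rw [Function.iterate_succ_apply']
        refine ⟨?_, g_psd A Q C W lam hQ hW hθ0 hθ1 ih.2⟩
        have e : X - gRic A Q C W lam ((gRic A Q C W lam)^[k] X) =
            (X - gRic A Q C W lam X) +
            (gRic A Q C W lam X - gRic A Q C W lam ((gRic A Q C W lam)^[k] X)) := by
          abel
        rw [e]
        exact hgX.add (g_mono A Q C W lam hQ hW hθ0 hθ1 ih.2 hXpd.posSemidef ih.1)
    -- pass to the limit: Xb ≤ X
    have hle : (X - Xb).PosSemidef := by
      refine Matrix.PosSemidef.of_dotProduct_mulVec_nonneg (hXpd.1.sub hXb.1) fun x => ?_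
      have hcont : Continuous fun Mt : Matrix (Fin n) (Fin n) ℝ =>
          dotProduct (star x) ((X - Mt) *ᵥ x) :=
        continuous_const.dotProduct
          ((continuous_const.sub continuous_id).matrix_mulVec continuous_const)
      have ht : Tendsto (fun k =>
          dotProduct (star x) ((X - (gRic A Q C W lam)^[k] X) *ᵥ x)) atTop
          (nhds (dotProduct (star x) ((X - Xb) *ᵥ x))) :=
        (hcont.tendsto Xb).comp (hconv X hXpd.posSemidef)
      exact ge_of_tendsto' ht fun k => (key k).1.dotProduct_mulVec_nonneg x
    constructor
    · have e : M - Xb = (M - X) + (X - Xb) := by abel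
      rw [e]; exact hXM.add hle
    · have e2 : C * (X - Xb) * Cᵀ = C * X * Cᵀ - C * Xb * Cᵀ := by
        rw [Matrix.mul_sub, Matrix.sub_mul]
      have e : T - (C * Xb * Cᵀ + R) =
          (T - (C * X * Cᵀ + R)) + (C * X * Cᵀ - C * Xb * Cᵀ) := by abel
      rw [e, ← e2]
      exact hXT.add (psd_conj hle C)
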